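/- Suppose E[‖ξ(X_1)‖_H] < ∞ and E[M(X_1)] < ∞, and define g*(x) = E[h(X_1, x)] / E[M(X_1)]. Then almost surely (1/t) Σ_{i=1}^{t} |g_i(X_i) − g*(X_i)| → 0 as t → ∞, and almost surely (1/t) Σ_{i=1}^{t} g_i(X_i) → E[g*(X_1)] as t → ∞. -/

import Mathlib

open MeasureTheory ProbabilityTheory Filter
open scoped RealInnerProductSpace Topology

private lemma sum_Icc_one_eq {α : Type*} [AddCommMonoid α] (f : ℕ → α) (n : ℕ) :
    ∑ i ∈ Finset.Icc 1 n, f i = ∑ i ∈ Finset.range n, f (i + 1) := by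
  induction n with
  | zero => simp
  | succ n ih =>
      rw [Finset.sum_Icc_succ_top (by omega), ih, Finset.sum_range_succ]

private lemma cesaro_null (a r : ℕ → ℝ) (ha : ∀ i, 0 ≤ a i) (hr : ∀ i, 0 ≤ r i)
    (hr0 : Filter.Tendsto r atTop (𝓝 0)) {L : ℝ}
    (hL : Filter.Tendsto (fun n : ℕ => (1 / (n : ℝ)) * ∑ i ∈ Finset.range n, a i) atTop (𝓝 L)) :
    Filter.Tendsto (fun n : ℕ => (1 / (n : ℝ)) * ∑ i ∈ Finset.range n, r i * a i) atTop (𝓝 0) := by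
  obtain ⟨C, hC⟩ : BddAbove (Set.range fun n : ℕ => (1 / (n : ℝ)) * ∑ i ∈ Finset.range n, a i) :=
    hL.bddAbove_range
  set D := max C 0 with hDdef
  have hD0 : (0 : ℝ) ≤ D := le_max_right _ _
  have hC' : ∀ n : ℕ, (1 / (n : ℝ)) * ∑ i ∈ Finset.range n, a i ≤ D :=
    fun n => le_trans (hC (Set.mem_range_self n)) (le_max_left _ _)
  rw [Metric.tendsto_atTop]
  intro ε hε
  have hδpos : 0 < ε / (2 * (D + 1)) := by positivity
  obtain ⟨N₀, hN₀⟩ := (Metric.tendsto_atTop.1 hr0) _ hδpos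
  set K := ∑ i ∈ Finset.range N₀, r i * a i with hKdef
  obtain ⟨N₁, hN₁⟩ :=
    (Metric.tendsto_atTop.1 (tendsto_const_div_atTop_nhds_zero_nat K)) (ε / 2) (by positivity)
  refine ⟨max (max N₀ N₁) 1, fun n hn => ?_⟩
  have hnN₀ : N₀ ≤ n := le_trans (le_trans (le_max_left _ _) (le_max_left _ _)) hn
  have hnN₁ : N₁ ≤ n := le_trans (le_trans (le_max_right _ _) (le_max_left _ _)) hn
  have hn1 : 1 ≤ n := le_trans (le_max_right _ _) hn
  have hnpos : (0 : ℝ) < n := by exact_mod_cast hn1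
  have hsplit : ∑ i ∈ Finset.range n, r i * a i = K + ∑ i ∈ Finset.Ico N₀ n, r i * a i :=
    (Finset.sum_range_add_sum_Ico _ hnN₀).symm
  have htail : ∑ i ∈ Finset.Ico N₀ n, r i * a i
      ≤ (ε / (2 * (D + 1))) * ∑ i ∈ Finset.range n, a i := by
    calc ∑ i ∈ Finset.Ico N₀ n, r i * a i
        ≤ ∑ i ∈ Finset.Ico N₀ n, (ε / (2 * (D + 1))) * a i := by
          refine Finset.sum_le_sum fun i hi => mul_le_mul_of_nonneg_right ?_ (ha i)
          have h := hN₀ i (Finset.mem_Ico.1 hi).1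
          rw [Real.dist_eq, sub_zero] at h
          exact le_of_lt (lt_of_le_of_lt (le_abs_self _) h)
      _ = (ε / (2 * (D + 1))) * ∑ i ∈ Finset.Ico N₀ n, a i := by rw [Finset.mul_sum]
      _ ≤ (ε / (2 * (D + 1))) * ∑ i ∈ Finset.range n, a i := by
          refine mul_le_mul_of_nonneg_left ?_ hδpos.le
          refine Finset.sum_le_sum_of_subset_of_nonneg ?_ fun i _ _ => ha i
          intro i hi
          rw [Finset.mem_range]
          exact (Finset.mem_Ico.1 hi).2
  have hsum_nonneg : 0 ≤ ∑ i ∈ Finset.range n, r i * a i :=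
    Finset.sum_nonneg fun i _ => mul_nonneg (hr i) (ha i)
  rw [Real.dist_eq, sub_zero,
    abs_of_nonneg (mul_nonneg (by positivity) hsum_nonneg)]
  have h1 : K / n < ε / 2 := by
    have h := hN₁ n hnN₁
    rw [Real.dist_eq, sub_zero] at h
    exact lt_of_le_of_lt (le_abs_self _) h
  have h2 : (ε / (2 * (D + 1))) * D < ε / 2 := by
    rw [div_mul_eq_mul_div, div_lt_div_iff₀ (by positivity) two_pos]
    nlinarith
  have t1 : (1 / (n : ℝ)) * ∑ i ∈ Finset.Ico N₀ n, r i * a i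
      ≤ (ε / (2 * (D + 1))) * ((1 / (n : ℝ)) * ∑ i ∈ Finset.range n, a i) := by
    have := mul_le_mul_of_nonneg_left htail (by positivity : (0 : ℝ) ≤ 1 / (n : ℝ))
    linarith [this]
  have t2 : (ε / (2 * (D + 1))) * ((1 / (n : ℝ)) * ∑ i ∈ Finset.range n, a i)
      ≤ (ε / (2 * (D + 1))) * D := mul_le_mul_of_nonneg_left (hC' n) hδpos.le
  calc (1 / (n : ℝ)) * ∑ i ∈ Finset.range n, r i * a i
      = K / n + (1 / (n : ℝ)) * ∑ i ∈ Finset.Ico N₀ n, r i * a i := by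
        rw [hsplit]; ring
    _ ≤ K / n + (ε / (2 * (D + 1))) * D := by linarith
    _ < ε / 2 + ε / 2 := by linarith
    _ = ε := by ring

/-- Let `(X_t)_{t ≥ 1}` be i.i.d. `𝒳`-valued random variables, `H` a separable real Hilbert
space, `ξ : 𝒳 → H` strongly measurable, and `h(x, y) = ⟪ξ x, ξ y⟫`. Let `M : 𝒳 → (0, ∞)`
be measurable with `h(x, y) ≥ -M(x)` for all `x, y`, and define payoffs
`g_t(x) = (∑_{i=1}^{t-1} h(X_i, x)) / (∑_{i=1}^{t-1} M(X_i))` (so `g_1 = 0`). If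
`E ‖ξ(X₁)‖ < ∞` and `E M(X₁) < ∞`, then, with `g*(x) = E[h(X₁, x)] / E[M(X₁)]`, almost
surely `(1/t) ∑_{i=1}^t |g_i(X_i) - g*(X_i)| → 0` and
`(1/t) ∑_{i=1}^t g_i(X_i) → E[g*(X₁)]`. -/
theorem payoff_first_order_slln
    {Ω : Type*} {mΩ : MeasurableSpace Ω} {P : Measure Ω} [IsProbabilityMeasure P]
    {𝒳 : Type*} {m𝒳 : MeasurableSpace 𝒳}
    (X : ℕ → Ω → 𝒳) (hXmeas : ∀ i, Measurable (X i))
    (hXindep : iIndepFun (m := fun _ => m𝒳) X P)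
    (hXident : ∀ i, Measure.map (X i) P = Measure.map (X 1) P)
    {H : Type*} [NormedAddCommGroup H] [InnerProductSpace ℝ H] [CompleteSpace H]
    [SecondCountableTopology H]
    (ξ : 𝒳 → H) (hξ : StronglyMeasurable ξ)
    (M : 𝒳 → ℝ) (hMmeas : Measurable M) (hMpos : ∀ x, 0 < M x)
    (hMbound : ∀ x y, -(M x) ≤ ⟪ξ x, ξ y⟫)
    (g : ℕ → Ω → 𝒳 → ℝ)
    (hg : ∀ t ω x, g t ω x =
      (∑ i ∈ Finset.Icc 1 (t - 1), ⟪ξ (X i ω), ξ x⟫) /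
        (∑ i ∈ Finset.Icc 1 (t - 1), M (X i ω)))
    (hnorm_int : Integrable (fun ω => ‖ξ (X 1 ω)‖) P)
    (hM_int : Integrable (fun ω => M (X 1 ω)) P)
    (gstar : 𝒳 → ℝ)
    (hgstar : ∀ x, gstar x = (∫ ω, ⟪ξ (X 1 ω), ξ x⟫ ∂P) / ∫ ω, M (X 1 ω) ∂P) :
    ∀ᵐ ω ∂P,
      Tendsto (fun t : ℕ =>
          (1 / (t : ℝ)) * ∑ i ∈ Finset.Icc 1 t, |g i ω (X i ω) - gstar (X i ω)|)
        atTop (𝓝 0) ∧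
      Tendsto (fun t : ℕ => (1 / (t : ℝ)) * ∑ i ∈ Finset.Icc 1 t, g i ω (X i ω))
        atTop (𝓝 (∫ ω', gstar (X 1 ω') ∂P)) := by
  borelize H
  have hξm : Measurable ξ := hξ.measurable
  -- shift the sequence to start at index 1
  set Y : ℕ → Ω → 𝒳 := fun i => X (i + 1) with hYdef
  have hYindep : Pairwise (Function.onFun (IndepFun · · P) Y) := by
    intro i j hij
    exact hXindep.indepFun (by omega : i + 1 ≠ j + 1)
  have hYident : ∀ i, IdentDistrib (Y i) (Y 0) P P := fun i =>
    ⟨(hXmeas _).aemeasurable, (hXmeas _).aemeasurable,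
      (hXident (i + 1)).trans (hXident 1).symm⟩
  -- basic quantities
  set μH : H := ∫ ω, ξ (X 1 ω) ∂P with hμHdef
  set m : ℝ := ∫ ω, M (X 1 ω) ∂P with hmdef
  have hint_ξ : Integrable (fun ω => ξ (X 1 ω)) P := by
    refine ⟨(hξ.comp_measurable (hXmeas 1)).aestronglyMeasurable, ?_⟩
    rw [← hasFiniteIntegral_norm_iff]
    exact hnorm_int.hasFiniteIntegral
  have hm : 0 < m := by
    rw [hmdef, integral_pos_iff_support_of_nonneg (fun ω => (hMpos (X 1 ω)).le) hM_int]
    have : Function.support (fun ω => M (X 1 ω)) = Set.univ := by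
      ext ω; simp [Function.support, (hMpos (X 1 ω)).ne']
    rw [this]
    simp
  set w : H := m⁻¹ • μH with hwdef
  have hgstar' : ∀ x, gstar x = ⟪w, ξ x⟫ := by
    intro x
    rw [hgstar x]
    have h1 : ∫ ω, ⟪ξ (X 1 ω), ξ x⟫ ∂P = ⟪μH, ξ x⟫ := by
      rw [real_inner_comm, hμHdef, ← integral_inner hint_ξ]
      exact integral_congr_ae (Eventually.of_forall fun ω => real_inner_comm _ _)
    rw [h1, hwdef, real_inner_smul_left, div_eq_inv_mul]
  have hgstarm : Measurable gstar := by
    have : gstar = fun x => ⟪w, ξ x⟫ := funext hgstar'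
    rw [this]
    exact (Continuous.inner continuous_const continuous_id).measurable.comp hξm
  have hgstar_int : Integrable (fun ω => gstar (X 1 ω)) P := by
    refine (hnorm_int.const_mul ‖w‖).mono'
      ((hgstarm.comp (hXmeas 1)).aestronglyMeasurable) (Eventually.of_forall fun ω => ?_)
    rw [Real.norm_eq_abs, hgstar']
    exact abs_real_inner_le_norm _ _
  -- the four strong laws
  have hA : ∀ᵐ ω ∂P, Tendsto (fun n : ℕ => (n : ℝ)⁻¹ • ∑ i ∈ Finset.range n, ξ (Y i ω))
      atTop (𝓝 μH) := by
    have := strong_law_ae (fun i ω => ξ (Y i ω)) hint_ξ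
      (fun i j hij => (hYindep hij).comp hξm hξm) (fun i => (hYident i).comp hξm)
    exact this
  have hB : ∀ᵐ ω ∂P, Tendsto (fun n : ℕ => (∑ i ∈ Finset.range n, M (Y i ω)) / n)
      atTop (𝓝 m) := by
    have := strong_law_ae_real (fun i ω => M (Y i ω)) hM_int
      (fun i j hij => (hYindep hij).comp hMmeas hMmeas) (fun i => (hYident i).comp hMmeas)
    exact this
  have hCnorm : ∀ᵐ ω ∂P, Tendsto (fun n : ℕ => (∑ i ∈ Finset.range n, ‖ξ (Y i ω)‖) / n)
      atTop (𝓝 (∫ ω, ‖ξ (X 1 ω)‖ ∂P)) := by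
    have := strong_law_ae_real (fun i ω => ‖ξ (Y i ω)‖) hnorm_int
      (fun i j hij => (hYindep hij).comp hξm.norm hξm.norm)
      (fun i => (hYident i).comp hξm.norm)
    exact this
  have hDg : ∀ᵐ ω ∂P, Tendsto (fun n : ℕ => (∑ i ∈ Finset.range n, gstar (Y i ω)) / n)
      atTop (𝓝 (∫ ω, gstar (X 1 ω) ∂P)) := by
    have := strong_law_ae_real (fun i ω => gstar (Y i ω)) hgstar_int
      (fun i j hij => (hYindep hij).comp hgstarm hgstarm)
      (fun i => (hYident i).comp hgstarm)
    exact this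
  filter_upwards [hA, hB, hCnorm, hDg] with ω hAω hBω hCω hDω
  -- sums along the trajectory
  set A : ℕ → H := fun n => ∑ i ∈ Finset.range n, ξ (X (i + 1) ω) with hAdef
  set B : ℕ → ℝ := fun n => ∑ i ∈ Finset.range n, M (X (i + 1) ω) with hBdef
  set u : ℕ → H := fun n => (B n)⁻¹ • A n with hudef
  have hu : Tendsto u atTop (𝓝 w) := by
    have hB' : Tendsto (fun n : ℕ => (n : ℝ)⁻¹ * B n) atTop (𝓝 m) := by
      refine hBω.congr fun n => ?_
      rw [div_eq_inv_mul]
    have hmain : Tendsto (fun n : ℕ => ((n : ℝ)⁻¹ * B n)⁻¹ • ((n : ℝ)⁻¹ • A n))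
        atTop (𝓝 (m⁻¹ • μH)) := (hB'.inv₀ hm.ne').smul hAω
    rw [← hwdef] at hmain
    refine hmain.congr' ?_
    filter_upwards [eventually_ge_atTop 1] with n hn
    have hn0 : (n : ℝ) ≠ 0 := by positivity
    rw [smul_smul]
    congr 1
    rw [mul_inv, inv_inv, mul_comm, ← mul_assoc, inv_mul_cancel₀ hn0, one_mul]
  set r : ℕ → ℝ := fun t => ‖u (t - 1) - w‖ with hrdef
  have hr0 : Tendsto r atTop (𝓝 0) := by
    have h1 : Tendsto (fun t : ℕ => u (t - 1)) atTop (𝓝 w) :=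
      hu.comp (tendsto_sub_atTop_nat 1)
    have := (h1.sub (tendsto_const_nhds (x := w))).norm
    simpa using this
  -- the key pointwise bound
  have hkey : ∀ t x, g t ω x = ⟪u (t - 1), ξ x⟫ := by
    intro t x
    rw [hg t ω x, sum_Icc_one_eq, sum_Icc_one_eq, hudef]
    simp only
    rw [real_inner_smul_left, ← sum_inner, div_eq_inv_mul]
  have hbd : ∀ t x, |g t ω x - gstar x| ≤ r t * ‖ξ x‖ := by
    intro t x
    rw [hkey t x, hgstar' x, ← inner_sub_left]
    exact abs_real_inner_le_norm _ _
  -- Cesàro convergence of the error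
  have hCω' : Tendsto (fun n : ℕ => (1 / (n : ℝ)) * ∑ i ∈ Finset.range n, ‖ξ (X (i + 1) ω)‖)
      atTop (𝓝 (∫ ω, ‖ξ (X 1 ω)‖ ∂P)) := by
    refine hCω.congr fun n => ?_
    rw [one_div, div_eq_inv_mul]
  have hkey0 : Tendsto (fun n : ℕ =>
      (1 / (n : ℝ)) * ∑ i ∈ Finset.range n, r (i + 1) * ‖ξ (X (i + 1) ω)‖) atTop (𝓝 0) :=
    cesaro_null _ _ (fun i => norm_nonneg _) (fun i => norm_nonneg _)
      (hr0.comp (tendsto_add_atTop_nat 1)) hCω'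
  have part1 : Tendsto (fun t : ℕ =>
      (1 / (t : ℝ)) * ∑ i ∈ Finset.Icc 1 t, |g i ω (X i ω) - gstar (X i ω)|)
      atTop (𝓝 0) := by
    refine squeeze_zero (fun t => ?_) (fun t => ?_) hkey0
    · exact mul_nonneg (by positivity) (Finset.sum_nonneg fun i _ => abs_nonneg _)
    · rw [sum_Icc_one_eq]
      refine mul_le_mul_of_nonneg_left ?_ (by positivity)
      exact Finset.sum_le_sum fun i _ => hbd (i + 1) (X (i + 1) ω)
  refine ⟨part1, ?_⟩
  -- second part
  have hDω' : Tendsto (fun t : ℕ => (1 / (t : ℝ)) * ∑ i ∈ Finset.Icc 1 t, gstar (X i ω))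
      atTop (𝓝 (∫ ω, gstar (X 1 ω) ∂P)) := by
    refine hDω.congr fun n => ?_
    rw [sum_Icc_one_eq, one_div, div_eq_inv_mul]
  have hdiff : Tendsto (fun t : ℕ =>
      (1 / (t : ℝ)) * ∑ i ∈ Finset.Icc 1 t, (g i ω (X i ω) - gstar (X i ω)))
      atTop (𝓝 0) := by
    refine squeeze_zero_norm (fun t => ?_) part1
    rw [Real.norm_eq_abs, abs_mul, abs_of_nonneg (by positivity : (0:ℝ) ≤ 1 / (t : ℝ))]
    exact mul_le_mul_of_nonneg_left (Finset.abs_sum_le_sum_abs _ _) (by positivity)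
  have := hDω'.add hdiff
  rw [add_zero] at this
  refine this.congr fun t => ?_
  rw [← mul_add, ← Finset.sum_add_distrib]
  congr 1
  exact Finset.sum_congr rfl fun i _ => by ring
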